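/- Let A, u, λ, B : ℝ → ℝ be 1-periodic functions with u twice continuously differentiable, A continuously differentiable and everywhere positive, λ continuous and everywhere positive, B continuous, and suppose u''(x) = −A(x)^{−1}A'(x)u'(x) + A(x)²u(x)λ(x) − A(x)² + B(x) for all x ∈ ℝ. Then for all x ∈ ℝ: inf_y (1 − B(y)A(y)^{−2})·λ(y)^{−1} ≤ u(x) ≤ sup_y (1 − B(y)A(y)^{−2})·λ(y)^{−1}. -/

import Mathlib

open Real

private lemma periodic_exists_max {f : ℝ → ℝ} (hf : Continuous f)
    (hper : Function.Periodic f 1) : ∃ x₀, ∀ x, f x ≤ f x₀ := by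
  obtain ⟨x₀, hx₀mem, hx₀⟩ := isCompact_Icc.exists_isMaxOn (⟨0, by norm_num⟩ :
    (Set.Icc (0:ℝ) 1).Nonempty) hf.continuousOn
  refine ⟨x₀, fun x => ?_⟩
  obtain ⟨y, hy, hxy⟩ := hper.exists_mem_Ico₀ one_pos x
  rw [hxy]
  exact hx₀ ⟨hy.1, hy.2.le⟩

private lemma periodic_bddAbove {f : ℝ → ℝ} (hf : Continuous f)
    (hper : Function.Periodic f 1) : BddAbove (Set.range f) := by
  obtain ⟨x₀, hx₀⟩ := periodic_exists_max hf hper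
  exact ⟨f x₀, by rintro _ ⟨x, rfl⟩; exact hx₀ x⟩

private lemma second_deriv_nonpos_at_max {u : ℝ → ℝ} (hu : ContDiff ℝ 2 u) {x₀ : ℝ}
    (hmax : ∀ x, u x ≤ u x₀) : deriv (deriv u) x₀ ≤ 0 := by
  by_contra h
  push_neg at h
  have hd1 : Differentiable ℝ (deriv u) := (hu.iterate_deriv' 1 1).differentiable (by simp)
  have hd0 : deriv u x₀ = 0 :=
    IsLocalMax.deriv_eq_zero (Filter.Eventually.of_forall hmax)
  have hdd : HasDerivAt (deriv u) (deriv (deriv u) x₀) x₀ := (hd1 x₀).hasDerivAt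
  -- slope of deriv u tends to a positive number, so deriv u > 0 just right of x₀
  have hslope := hasDerivAt_iff_tendsto_slope.1 hdd
  have hpos : ∀ᶠ y in nhdsWithin x₀ (Set.Ioi x₀), 0 < deriv u y := by
    have h1 : ∀ᶠ y in nhdsWithin x₀ {x₀}ᶜ, 0 < slope (deriv u) x₀ y :=
      hslope.eventually (eventually_gt_nhds h)
    have h2 : nhdsWithin x₀ (Set.Ioi x₀) ≤ nhdsWithin x₀ {x₀}ᶜ :=
      nhdsWithin_mono _ (fun y hy => ne_of_gt hy)
    filter_upwards [h2 h1, self_mem_nhdsWithin] with y hy hy'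
    have hy'' : (0:ℝ) < y - x₀ := sub_pos.2 hy'
    have := mul_pos hy hy''
    rw [slope_def_field] at this
    have : deriv u y - deriv u x₀ > 0 := by
      rw [div_mul_cancel₀] at this
      · linarith
      · exact ne_of_gt hy''
    linarith [hd0]
  obtain ⟨b, hb, hsub⟩ := (nhdsGT_basis x₀).eventually_iff.1 hpos
  have hmono : StrictMonoOn u (Set.Icc x₀ b) := by
    apply strictMonoOn_of_deriv_pos (convex_Icc _ _) hu.continuous.continuousOn
    intro y hy
    rw [interior_Icc] at hy
    exact hsub ⟨hy.1, hy.2⟩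
  have hmid : x₀ < (x₀ + b) / 2 := by linarith
  have hmid2 : (x₀ + b) / 2 ≤ b := by linarith
  have := hmono ⟨le_refl _, hb.le⟩ ⟨hmid.le, hmid2⟩ hmid
  exact absurd (hmax ((x₀ + b) / 2)) (not_le.2 this)

private lemma second_deriv_nonneg_at_min {u : ℝ → ℝ} (hu : ContDiff ℝ 2 u) {x₀ : ℝ}
    (hmin : ∀ x, u x₀ ≤ u x) : 0 ≤ deriv (deriv u) x₀ := by
  have h := second_deriv_nonpos_at_max (u := fun x => -u x) hu.neg
    (x₀ := x₀) (fun x => neg_le_neg (hmin x))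
  have h1 : deriv (fun x => -u x) = fun x => -deriv u x := by
    funext y; exact deriv.neg
  rw [h1] at h
  have h2 : deriv (fun x => -deriv u x) x₀ = -deriv (deriv u) x₀ := deriv.neg
  rw [h2] at h
  linarith

/-- Two-sided maximum/minimum principle for the inhomogeneous lapse-type equation
`u'' = -A⁻¹ A' u' + A² u λ - A² + B` on the circle: for every `x`,
`inf_y (1 - B y / A y²) (λ y)⁻¹ ≤ u x ≤ sup_y (1 - B y / A y²) (λ y)⁻¹`. -/
theorem lapse_derivative_two_sided_bound
    (A u lam B : ℝ → ℝ)
    (hAper : Function.Periodic A 1) (huper : Function.Periodic u 1)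
    (hlamper : Function.Periodic lam 1) (hBper : Function.Periodic B 1)
    (hu : ContDiff ℝ 2 u) (hA : ContDiff ℝ 1 A) (hApos : ∀ x, 0 < A x)
    (hlamcont : Continuous lam) (hlampos : ∀ x, 0 < lam x) (hBcont : Continuous B)
    (heq : ∀ x, deriv (deriv u) x =
      -(A x)⁻¹ * deriv A x * deriv u x + (A x) ^ 2 * u x * lam x - (A x) ^ 2 + B x) :
    ∀ x, (⨅ y, (1 - B y * ((A y) ^ 2)⁻¹) * (lam y)⁻¹) ≤ u x ∧
      u x ≤ ⨆ y, (1 - B y * ((A y) ^ 2)⁻¹) * (lam y)⁻¹ := by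
  set g : ℝ → ℝ := fun y => (1 - B y * ((A y) ^ 2)⁻¹) * (lam y)⁻¹ with hg
  have hgcont : Continuous g := by
    apply Continuous.mul
    · exact continuous_const.sub (hBcont.mul ((hA.continuous.pow 2).inv₀
        fun x => (pow_pos (hApos x) 2).ne'))
    · exact hlamcont.inv₀ fun x => (hlampos x).ne'
  have hgper : Function.Periodic g 1 := by
    intro x; simp only [hg, hAper x, hBper x, hlamper x]
  have hbddA : BddAbove (Set.range g) := periodic_bddAbove hgcont hgper
  have hbddB : BddBelow (Set.range g) := by
    obtain ⟨x₀, hx₀⟩ := periodic_exists_max hgcont.neg (fun x => by simp [hgper x])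
    exact ⟨g x₀, by rintro _ ⟨x, rfl⟩; have h := hx₀ x; simp only [Pi.neg_apply] at h; linarith⟩
  -- at an extremum point, u is bounded by g
  have key : ∀ x₀ : ℝ, deriv u x₀ = 0 →
      (deriv (deriv u) x₀ ≤ 0 → u x₀ ≤ g x₀) ∧ (0 ≤ deriv (deriv u) x₀ → g x₀ ≤ u x₀) := by
    intro x₀ hd0
    have heq0 := heq x₀
    rw [hd0] at heq0
    have hA2 : (0:ℝ) < (A x₀) ^ 2 := pow_pos (hApos x₀) 2
    have hlam : (0:ℝ) < lam x₀ := hlampos x₀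
    have hgval : g x₀ = ((A x₀) ^ 2 - B x₀) / ((A x₀) ^ 2 * lam x₀) := by
      rw [hg]; field_simp
      rw [sub_div, div_self hA2.ne']
    constructor
    · intro hle
      rw [hgval, le_div_iff₀ (by positivity)]
      nlinarith [heq0]
    · intro hge
      rw [hgval, div_le_iff₀ (by positivity)]
      nlinarith [heq0]
  intro x
  constructor
  · obtain ⟨x₁, hx₁⟩ := periodic_exists_max hu.continuous.neg (fun y => by simp [huper y])
    have hmin : ∀ y, u x₁ ≤ u y := fun y => by have h := hx₁ y; simp only [Pi.neg_apply] at h; linarith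
    have hd0 : deriv u x₁ = 0 :=
      IsLocalMin.deriv_eq_zero (Filter.Eventually.of_forall hmin)
    have h2 := second_deriv_nonneg_at_min hu hmin
    calc (⨅ y, g y) ≤ g x₁ := ciInf_le hbddB x₁
      _ ≤ u x₁ := (key x₁ hd0).2 h2
      _ ≤ u x := hmin x
  · obtain ⟨x₀, hx₀⟩ := periodic_exists_max hu.continuous huper
    have hd0 : deriv u x₀ = 0 :=
      IsLocalMax.deriv_eq_zero (Filter.Eventually.of_forall hx₀)
    have h2 := second_deriv_nonpos_at_max hu hx₀
    calc u x ≤ u x₀ := hx₀ x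
      _ ≤ g x₀ := (key x₀ hd0).1 h2
      _ ≤ ⨆ y, g y := le_ciSup hbddA x₀
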